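/- Let F be a finite field, let k < n be positive integers, and let G be an n×k matrix over the polynomial ring F[s] of full column rank k. Let C = { G·u : u ∈ F[s]^k } ⊆ (F[s])^n be the convolutional code generated by G, and let δ be the maximum of the degrees of the (nonzero) determinants of the k×k submatrices of G (the complexity of C). Then the free distance of C satisfies d_free(C) ≤ (n−k)·(⌊δ/k⌋ + 1) + δ + 1. -/

import Mathlib

open Polynomial

/-- The weight of a polynomial vector: total number of nonzero coefficients
occurring among its polynomial entries. -/
noncomputable def polyVecWeight {F : Type*} [Field F] {n : ℕ}
    (v : Fin n → Polynomial F) : ℕ :=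
  ∑ i, (v i).support.card

/-- The free distance of a set of polynomial vectors (a convolutional code):
the minimal weight of a nonzero codeword. -/
noncomputable def freeDist {F : Type*} [Field F] {n : ℕ}
    (C : Set (Fin n → Polynomial F)) : ℕ :=
  sInf {w | ∃ v ∈ C, v ≠ 0 ∧ polyVecWeight v = w}


open Matrix

section Helpers

variable {F : Type*} [Field F] {n k : ℕ}


variable {F : Type*} [Field F]

lemma myCoeffProd {ι : Type*} (s : Finset ι) (f : ι → Polynomial F) (e : ι → ℕ)
    (h : ∀ i ∈ s, (f i).natDegree ≤ e i) :
    (∏ i ∈ s, f i).coeff (∑ i ∈ s, e i) = ∏ i ∈ s, (f i).coeff (e i) := by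
  classical
  induction s using Finset.induction_on with
  | empty => simp
  | @insert a s ha ih =>
    rw [Finset.prod_insert ha, Finset.sum_insert ha, Finset.prod_insert ha,
      Polynomial.coeff_mul_add_eq_of_natDegree_le (h a (Finset.mem_insert_self a s))
        ((Polynomial.natDegree_prod_le s f).trans (Finset.sum_le_sum (fun i hi => h i (Finset.mem_insert_of_mem hi)))),
      ih (fun i hi => h i (Finset.mem_insert_of_mem hi))]

lemma myCoeffDet {k : ℕ} (M : Matrix (Fin k) (Fin k) (Polynomial F)) (e : Fin k → ℕ)
    (h : ∀ i j, (M i j).natDegree ≤ e j) :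
    (M.det).coeff (∑ j, e j) = Matrix.det (fun i j => (M i j).coeff (e j)) := by
  rw [Matrix.det_apply, Polynomial.finset_sum_coeff]
  erw [Matrix.det_apply]
  refine Finset.sum_congr rfl (fun σ _ => ?_)
  rw [Polynomial.coeff_smul, myCoeffProd _ _ _ (fun j _ => h (σ j) j)]


lemma myRankLemma {n k : ℕ} (M : Matrix (Fin n) (Fin k) F)
    (hM : Function.Injective M.mulVec) :
    ∃ r : Fin k → Fin n, StrictMono r ∧ (M.submatrix r id).det ≠ 0 := by
  classical
  -- rows of M span (Fin k → F)
  have hrank : M.rank = k := by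
    rw [Matrix.rank]
    have : Function.Injective M.mulVecLin := by simpa [Matrix.coe_mulVecLin] using hM
    rw [LinearMap.finrank_range_of_inj this, Module.finrank_fintype_fun_eq_card,
      Fintype.card_fin]
  have htop : Submodule.span F (Set.range (fun j => M j)) = ⊤ := by
    have h1 : Mᵀ.rank = k := by rw [Matrix.rank_transpose]; exact hrank
    rw [Matrix.rank_eq_finrank_span_cols] at h1
    change Module.finrank F (Submodule.span F (Set.range fun j => M j)) = k at h1
    exact Submodule.eq_top_of_finrank_eq (by
      rw [h1, Module.finrank_fintype_fun_eq_card, Fintype.card_fin])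
  obtain ⟨b, hbsub, hbspan, hbind⟩ :=
    exists_linearIndependent F (Set.range (fun j => M j))
  rw [htop] at hbspan
  have hbfin : b.Finite := hbind.setFinite
  have : Fintype b := hbfin.fintype
  have hcardb : Fintype.card b = k := by
    have hbasis : Module.Basis b F (Fin k → F) := Module.Basis.mk hbind (by rw [Subtype.range_coe_subtype, Set.setOf_mem_eq, hbspan])
    have := Module.finrank_eq_card_basis hbasis
    rw [Module.finrank_fintype_fun_eq_card, Fintype.card_fin] at this
    exact this.symm
  -- pick row for each element of b
  have hpick : ∀ x : b, ∃ j : Fin n, M j = (x : Fin k → F) := fun x => hbsub x.2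
  choose pick hpickEq using hpick
  have hpickInj : Function.Injective pick := fun x y hxy => by
    apply Subtype.ext
    rw [← hpickEq x, ← hpickEq y, hxy]
  let eqv : Fin k ≃ b := (Fintype.equivFinOfCardEq hcardb).symm
  let S : Finset (Fin n) := Finset.univ.image (fun a => pick (eqv a))
  have hScard : S.card = k := by
    show (Finset.univ.image (fun a => pick (eqv a))).card = k
    rw [Finset.card_image_of_injective _ (show Function.Injective (fun a => pick (eqv a)) from hpickInj.comp eqv.injective), Finset.card_univ, Fintype.card_fin]
  let r : Fin k → Fin n := fun a => (S.orderIsoOfFin hScard a : Fin n)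
  have hrmono : StrictMono r := fun a a' h => by
    exact_mod_cast (S.orderIsoOfFin hScard).strictMono h
  refine ⟨r, hrmono, ?_⟩
  -- rows of the submatrix are elements of b
  have hmem : ∀ a : Fin k, ∃ x : b, pick x = r a ∧ M (r a) = (x : Fin k → F) := by
    intro a
    have : r a ∈ S := (S.orderIsoOfFin hScard a).2
    obtain ⟨a', -, ha'⟩ := Finset.mem_image.1 this
    exact ⟨eqv a', ha', by rw [← ha', hpickEq]⟩
  choose g hg1 hg2 using hmem
  have hginj : Function.Injective g := by
    intro a a' h
    have : r a = r a' := by rw [← hg1 a, ← hg1 a', h]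
    exact hrmono.injective this
  have hli : LinearIndependent F (fun a : Fin k => (M.submatrix r id) a) := by
    have : (fun a : Fin k => (M.submatrix r id) a) = (fun x : b => (x : Fin k → F)) ∘ g := by
      funext a
      simp only [Function.comp_apply, ← hg2 a]
      rfl
    rw [this]
    exact hbind.comp g hginj
  have := Matrix.linearIndependent_rows_iff_isUnit.1 hli
  have hdet := Matrix.isUnit_iff_isUnit_det _ |>.1 this
  exact hdet.ne_zero


/-- column degree -/
noncomputable def myColDeg (H : Matrix (Fin n) (Fin k) (Polynomial F)) (i : Fin k) : ℕ :=
  Finset.univ.sup (fun j => (H j i).natDegree)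

lemma myNatDegree_le_colDeg (H : Matrix (Fin n) (Fin k) (Polynomial F)) (j : Fin n) (i : Fin k) :
    (H j i).natDegree ≤ myColDeg H i :=
  Finset.le_sup (f := fun j => (H j i).natDegree) (Finset.mem_univ j)

/-- leading coefficient matrix -/
noncomputable def myLcMat (H : Matrix (Fin n) (Fin k) (Polynomial F)) :
    Matrix (Fin n) (Fin k) F := fun j i => (H j i).coeff (myColDeg H i)

/-- invariant through column reduction -/
def myGood (G H : Matrix (Fin n) (Fin k) (Polynomial F)) (δ : ℕ) : Prop :=
  (∀ u, ∃ u', H.mulVec u = G.mulVec u') ∧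
  Function.Injective H.mulVec ∧
  (∀ r : Fin k → Fin n, StrictMono r → (H.submatrix r id).det ≠ 0 →
    ((H.submatrix r id).det).natDegree ≤ δ)

lemma myStep (G H : Matrix (Fin n) (Fin k) (Polynomial F)) (δ : ℕ)
    (hG : myGood G H δ) (c : Fin k → F) (hc : c ≠ 0)
    (hdep : (myLcMat H).mulVec c = 0) :
    ∃ H', myGood G H' δ ∧ (∑ i, myColDeg H' i) < ∑ i, myColDeg H i := by
  classical
  set e := myColDeg H with he
  -- choose i₀ maximizing e over the support of c
  have hsne : (Finset.univ.filter (fun i => c i ≠ 0)).Nonempty := by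
    obtain ⟨i, hi⟩ := Function.ne_iff.1 hc
    exact ⟨i, Finset.mem_filter.2 ⟨Finset.mem_univ i, hi⟩⟩
  obtain ⟨i₀, hi₀mem, hi₀max⟩ := Finset.exists_max_image _ e hsne
  have hci₀ : c i₀ ≠ 0 := (Finset.mem_filter.1 hi₀mem).2
  have hcm : ∀ m, c m ≠ 0 → e m ≤ e i₀ := fun m hm =>
    hi₀max m (Finset.mem_filter.2 ⟨Finset.mem_univ m, hm⟩)
  set c' : Fin k → Polynomial F := fun m => C (c m) * X ^ (e i₀ - e m) with hc'
  have hc'i₀ : c' i₀ = C (c i₀) := by simp [hc']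
  set v : Fin n → Polynomial F := fun j => ∑ m, c' m * H j m with hv
  set H' : Matrix (Fin n) (Fin k) (Polynomial F) := H.updateCol i₀ v with hH'
  set V : Matrix (Fin k) (Fin k) (Polynomial F) := (1 : Matrix _ _ _).updateCol i₀ c' with hV
  have hHV : H' = H * V := by
    refine Matrix.ext (fun j i => ?_)
    by_cases hi : i = i₀
    · subst hi
      rw [hH', Matrix.updateCol_self, Matrix.mul_apply]
      show (∑ m, c' m * H j m) = _
      refine Finset.sum_congr rfl (fun m _ => ?_)
      rw [hV, Matrix.updateCol_self]
      exact mul_comm _ _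
    · rw [hH', Matrix.updateCol_ne hi, Matrix.mul_apply]
      have : ∀ m, H j m * V m i = if m = i then H j m else 0 := by
        intro m
        rw [hV, Matrix.updateCol_ne hi, Matrix.one_apply]
        split <;> simp
      rw [Finset.sum_congr rfl (fun m _ => this m), Finset.sum_ite_eq' Finset.univ i
        (fun m => H j m)]
      simp
  have hdetV : V.det = C (c i₀) := by
    have hcol : c' = fun m => ∑ i, c' i • (1 : Matrix (Fin k) (Fin k) (Polynomial F)) m i := by
      funext m
      simp [Matrix.one_apply, Finset.sum_ite_eq']
    rw [hV, show (1 : Matrix (Fin k) (Fin k) (Polynomial F)).updateCol i₀ c'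
        = (1 : Matrix (Fin k) (Fin k) (Polynomial F)).updateCol i₀
          (fun m => ∑ i, c' i • (1 : Matrix (Fin k) (Fin k) (Polynomial F)) m i) by rw [← hcol],
      Matrix.det_updateCol_sum]
    simp [hc'i₀, smul_eq_mul]
  have hdetVne : V.det ≠ 0 := by
    rw [hdetV]
    exact fun h => hci₀ (Polynomial.C_eq_zero.1 h)
  have hVinj : Function.Injective V.mulVec := by
    intro a b hab
    by_contra hne
    have h1 : V.mulVec (a - b) = 0 := by
      rw [Matrix.mulVec_sub, hab, sub_self]
    exact hdetVne (Matrix.exists_mulVec_eq_zero_iff.1 ⟨a - b, sub_ne_zero.2 hne, h1⟩)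
  have hmv : ∀ u, H'.mulVec u = H.mulVec (V.mulVec u) := by
    intro u; rw [hHV, Matrix.mulVec_mulVec]
  have hGood' : myGood G H' δ := by
    refine ⟨fun u => ?_, fun a b hab => ?_, fun r hr hne => ?_⟩
    · rw [hmv]; exact hG.1 _
    · rw [hmv, hmv] at hab
      exact hVinj (hG.2.1 hab)
    · have hsub : H'.submatrix r id = (H.submatrix r id).updateCol i₀
          (fun a => ∑ m, c' m • (H.submatrix r id) a m) := by
        refine Matrix.ext (fun a b => ?_)
        by_cases hb : b = i₀
        · subst hb
          simp [hH', Matrix.updateCol_self, Matrix.submatrix_apply, hv, smul_eq_mul]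
        · simp [hH', Matrix.updateCol_ne hb, Matrix.submatrix_apply]
      have hdet : (H'.submatrix r id).det = C (c i₀) * (H.submatrix r id).det := by
        rw [hsub, Matrix.det_updateCol_sum, hc'i₀, smul_eq_mul]
      rw [hdet] at hne ⊢
      have hHrne : (H.submatrix r id).det ≠ 0 := fun h => hne (by rw [h, mul_zero])
      rw [Polynomial.natDegree_C_mul hci₀]
      exact hG.2.2 r hr hHrne
  -- coefficient and degree facts about the new column
  have hterm : ∀ j m, (c' m * H j m).coeff (e i₀) = c m * myLcMat H j m := by
    intro j m
    by_cases hm : c m = 0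
    · simp [hc', hm, myLcMat]
    · have hle : e m ≤ e i₀ := hcm m hm
      rw [hc', mul_assoc, Polynomial.coeff_C_mul]
      have h2 := Polynomial.coeff_X_pow_mul (H j m) (e i₀ - e m) (e m)
      rw [show e m + (e i₀ - e m) = e i₀ from by omega] at h2
      rw [h2]
      rfl
  have hcoeff : ∀ j, (v j).coeff (e i₀) = 0 := by
    intro j
    rw [hv]
    rw [Polynomial.finset_sum_coeff]
    have : ∑ m, (c' m * H j m).coeff (e i₀) = ∑ m, myLcMat H j m * c m := by
      refine Finset.sum_congr rfl (fun m _ => ?_)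
      rw [hterm j m, mul_comm]
    rw [this]
    have := congrFun hdep j
    simpa [Matrix.mulVec, dotProduct] using this
  have hdeg : ∀ j, (v j).natDegree ≤ e i₀ := by
    intro j
    refine Polynomial.natDegree_sum_le_of_forall_le _ _ (fun m _ => ?_)
    by_cases hm : c m = 0
    · simp [hc', hm]
    · calc (c' m * H j m).natDegree ≤ (c' m).natDegree + (H j m).natDegree :=
            Polynomial.natDegree_mul_le
        _ ≤ (e i₀ - e m) + e m := by
            refine add_le_add ?_ (myNatDegree_le_colDeg H j m)
            refine Polynomial.natDegree_mul_le.trans ?_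
            simp [Polynomial.natDegree_C, Polynomial.natDegree_X_pow]
        _ = e i₀ := by have := hcm m hm; omega
  have hlt : ∀ j, v j ≠ 0 → (v j).natDegree < e i₀ := by
    intro j hvj
    refine lt_of_le_of_ne (hdeg j) (fun hEq => ?_)
    have h1 := Polynomial.leadingCoeff_ne_zero.mpr hvj
    rw [Polynomial.leadingCoeff, hEq, hcoeff j] at h1
    exact h1 rfl
  have hpos : 0 < e i₀ := by
    by_contra hp
    have he0 : e i₀ = 0 := by omega
    have hz : ∀ j, v j = 0 := by
      intro j
      have h1 : (v j).natDegree ≤ 0 := he0 ▸ hdeg j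
      rw [Polynomial.eq_C_of_natDegree_le_zero h1]
      have := hcoeff j
      rw [he0] at this
      rw [this, map_zero]
    have hcol0 : H'.mulVec (Pi.single i₀ 1) = 0 := by
      funext j
      rw [Matrix.mulVec_single]
      simp [hH', Matrix.updateCol_self, hz j]
    have := hGood'.2.1 (hcol0.trans (Matrix.mulVec_zero H').symm)
    have h2 := congrFun this i₀
    simp at h2
  have hcolEq : ∀ i, i ≠ i₀ → myColDeg H' i = e i := by
    intro i hi
    unfold myColDeg
    refine Finset.sup_congr rfl (fun j _ => ?_)
    rw [hH', Matrix.updateCol_ne hi]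
  have hcolLt : myColDeg H' i₀ < e i₀ := by
    unfold myColDeg
    rw [Finset.sup_lt_iff (by simpa using hpos)]
    intro j _
    rw [hH', Matrix.updateCol_self]
    by_cases hvj : v j = 0
    · simp [hvj, hpos]
    · exact hlt j hvj
  refine ⟨H', hGood', ?_⟩
  refine Finset.sum_lt_sum (fun i _ => ?_) ⟨i₀, Finset.mem_univ i₀, hcolLt⟩
  by_cases hi : i = i₀
  · subst hi; exact hcolLt.le
  · rw [hcolEq i hi]

lemma myExistsReduced (G : Matrix (Fin n) (Fin k) (Polynomial F)) (δ : ℕ)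
    (H : Matrix (Fin n) (Fin k) (Polynomial F)) (hG : myGood G H δ) :
    ∃ H', myGood G H' δ ∧
      ∀ c : Fin k → F, (myLcMat H').mulVec c = 0 → c = 0 := by
  classical
  suffices h : ∀ N (H : Matrix (Fin n) (Fin k) (Polynomial F)), myGood G H δ →
      (∑ i, myColDeg H i) ≤ N → ∃ H', myGood G H' δ ∧
      ∀ c : Fin k → F, (myLcMat H').mulVec c = 0 → c = 0 by
    exact h _ H hG le_rfl
  intro N
  induction N with
  | zero =>
    intro H hGood hsum
    by_cases hred : ∀ c : Fin k → F, (myLcMat H).mulVec c = 0 → c = 0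
    · exact ⟨H, hGood, hred⟩
    · push_neg at hred
      obtain ⟨c, hc0, hcne⟩ := hred
      obtain ⟨H', -, hlt⟩ := myStep G H δ hGood c hcne hc0
      omega
  | succ N ih =>
    intro H hGood hsum
    by_cases hred : ∀ c : Fin k → F, (myLcMat H).mulVec c = 0 → c = 0
    · exact ⟨H, hGood, hred⟩
    · push_neg at hred
      obtain ⟨c, hc0, hcne⟩ := hred
      obtain ⟨H', hGood', hlt⟩ := myStep G H δ hGood c hcne hc0
      exact ih H' hGood' (by omega)

end Helpers

/-- The generalized Singleton bound: for a rate `k/n` convolutional code of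
complexity `δ`, the free distance is at most `(n-k)(⌊δ/k⌋+1) + δ + 1`. -/
theorem generalized_singleton_bound {F : Type*} [Field F] [Fintype F] {n k : ℕ}
    (hk : 0 < k) (hkn : k < n)
    (G : Matrix (Fin n) (Fin k) (Polynomial F))
    (hfull : Function.Injective G.mulVec) (δ : ℕ)
    (hδ : IsGreatest {d : ℕ | ∃ r : Fin k → Fin n, StrictMono r ∧
        (G.submatrix r id).det ≠ 0 ∧ ((G.submatrix r id).det).natDegree = d} δ) :
    freeDist {v | ∃ u : Fin k → Polynomial F, v = G.mulVec u} ≤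
      (n - k) * (δ / k + 1) + δ + 1 := by
  classical
  set ℓ := δ / k with hℓ
  have hGoodG : myGood G G δ := ⟨fun u => ⟨u, rfl⟩, hfull, fun r hr hne => hδ.2 ⟨r, hr, hne, rfl⟩⟩
  obtain ⟨H, hGood, hred⟩ := myExistsReduced G δ G hGoodG
  set e := myColDeg H with he
  have hlcInj : Function.Injective (myLcMat H).mulVec := by
    intro a b hab
    have h1 : (myLcMat H).mulVec (a - b) = 0 := by rw [Matrix.mulVec_sub, hab, sub_self]
    have := hred _ h1
    rwa [sub_eq_zero] at this
  obtain ⟨r, hr, hdetne⟩ := myRankLemma (myLcMat H) hlcInj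
  have hbound : ∀ a b, ((H.submatrix r id) a b).natDegree ≤ e b := fun a b =>
    myNatDegree_le_colDeg H (r a) b
  have hcoeffdet := myCoeffDet (H.submatrix r id) e hbound
  have hdetne' : Matrix.det (fun i j => ((H.submatrix r id) i j).coeff (e j)) ≠ 0 := hdetne
  have hdet0 : (H.submatrix r id).det ≠ 0 := by
    intro h
    rw [h, Polynomial.coeff_zero] at hcoeffdet
    exact hdetne' hcoeffdet.symm
  have hsumle : (∑ j, e j) ≤ δ := by
    refine le_trans ?_ (hGood.2.2 r hr hdet0)
    exact Polynomial.le_natDegree_of_ne_zero (by rw [hcoeffdet]; exact hdetne')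
  -- dimension count
  set d := ∑ i, (ℓ + 1 - e i) with hd
  have hkl : k * (ℓ + 1) ≤ d + δ := by
    calc k * (ℓ + 1) = ∑ _i : Fin k, (ℓ + 1) := by
          rw [Finset.sum_const, Finset.card_univ, Fintype.card_fin, smul_eq_mul]
      _ ≤ ∑ i, ((ℓ + 1 - e i) + e i) := Finset.sum_le_sum (fun i _ => by omega)
      _ = d + ∑ i, e i := Finset.sum_add_distrib
      _ ≤ d + δ := Nat.add_le_add_left hsumle d
  have hdelta : δ < k * (ℓ + 1) := by
    have h1 : k * (ℓ + 1) = k * ℓ + k := by ring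
    have h2 : k * ℓ + δ % k = δ := Nat.div_add_mod δ k
    have h3 : δ % k < k := Nat.mod_lt _ hk
    rw [h1, ← h2]
    exact Nat.add_lt_add_left h3 _
  have hd1 : 1 ≤ d := by
    have := lt_of_lt_of_le hdelta hkl
    omega
  have hdle : d ≤ k * (ℓ + 1) := by
    calc d = ∑ i, (ℓ + 1 - e i) := hd
      _ ≤ ∑ _i : Fin k, (ℓ + 1) := Finset.sum_le_sum (fun i _ => Nat.sub_le _ _)
      _ = k * (ℓ + 1) := by
          rw [Finset.sum_const, Finset.card_univ, Fintype.card_fin, smul_eq_mul]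
  -- the family of low-degree codewords
  set w : ((i : Fin k) × Fin (ℓ + 1 - e i)) → Fin n → Polynomial F :=
    fun p j => H j p.1 * X ^ (p.2 : ℕ) with hw
  have hdcard : Fintype.card ((i : Fin k) × Fin (ℓ + 1 - e i)) = d := by
    simp [Fintype.card_sigma, hd]
  have hep : ∀ p : (i : Fin k) × Fin (ℓ + 1 - e i), (p.2 : ℕ) + e p.1 ≤ ℓ := by
    intro p; have := p.2.2; omega
  have hwdeg : ∀ p j, (w p j).natDegree ≤ ℓ := by
    intro p j
    refine Polynomial.natDegree_mul_le.trans ?_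
    rw [Polynomial.natDegree_X_pow]
    have h5 : (H j p.1).natDegree ≤ e p.1 := myNatDegree_le_colDeg H j p.1
    have h6 := hep p
    omega
  set uOf : (((i : Fin k) × Fin (ℓ + 1 - e i)) → F) → Fin k → Polynomial F :=
    fun a m => ∑ t : Fin (ℓ + 1 - e m), C (a ⟨m, t⟩) * X ^ (t : ℕ) with huOf
  have hident : ∀ a j, (∑ p, a p • w p j) = H.mulVec (uOf a) j := by
    intro a j
    rw [← Finset.univ_sigma_univ, Finset.sum_sigma]
    show (∑ m, ∑ t : Fin (ℓ + 1 - e m), a ⟨m, t⟩ • (H j m * X ^ (t : ℕ)))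
      = ∑ m, H j m * uOf a m
    refine Finset.sum_congr rfl (fun m _ => ?_)
    show _ = H j m * ∑ t : Fin (ℓ + 1 - e m), C (a ⟨m, t⟩) * X ^ (t : ℕ)
    rw [Finset.mul_sum]
    refine Finset.sum_congr rfl (fun t _ => ?_)
    rw [Polynomial.smul_eq_C_mul]
    ring
  have hindep : ∀ a : ((i : Fin k) × Fin (ℓ + 1 - e i)) → F, (∀ j, (∑ p, a p • w p j) = 0) → a = 0 := by
    intro a ha
    have h1 : H.mulVec (uOf a) = 0 := by
      funext j; rw [← hident a j]; exact ha j
    have h2 : uOf a = 0 := hGood.2.1 (h1.trans (Matrix.mulVec_zero H).symm)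
    funext p
    obtain ⟨m, t⟩ := p
    have h3 := congrFun h2 m
    have h4 := congrArg (fun q => Polynomial.coeff q (t : ℕ)) h3
    simp only [huOf, Polynomial.finset_sum_coeff, Polynomial.coeff_C_mul,
      Polynomial.coeff_X_pow, Polynomial.coeff_zero, Pi.zero_apply] at h4
    rw [Finset.sum_eq_single t (fun t' _ ht' => by
        rw [if_neg (fun hh => ht' (Fin.ext hh.symm)), mul_zero])
      (fun ht => absurd (Finset.mem_univ t) ht)] at h4
    rw [if_pos rfl, mul_one] at h4
    exact h4
  -- choose coordinate subset T
  have hcarduniv : (Finset.univ : Finset (Fin n × Fin (ℓ + 1))).card = n * (ℓ + 1) := by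
    simp
  obtain ⟨T, -, hTcard⟩ := Finset.exists_subset_card_eq
      (s := (Finset.univ : Finset (Fin n × Fin (ℓ + 1)))) (n := d - 1) (by
        rw [hcarduniv]
        exact le_trans (Nat.sub_le d 1)
          (hdle.trans (Nat.mul_le_mul_right _ hkn.le)))
  set Ψ : Matrix {x // x ∈ T} ((i : Fin k) × Fin (ℓ + 1 - e i)) F :=
    fun t p => (w p t.1.1).coeff (t.1.2 : ℕ) with hΨ
  have hΨnotinj : ¬ Function.Injective Ψ.mulVecLin := by
    intro hinj
    have h1 := LinearMap.finrank_le_finrank_of_injective hinj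
    rw [Module.finrank_fintype_fun_eq_card, Module.finrank_fintype_fun_eq_card, hdcard,
      Fintype.card_coe, hTcard] at h1
    omega
  rw [Function.not_injective_iff] at hΨnotinj
  obtain ⟨a, b, hab, hne⟩ := hΨnotinj
  set c : ((i : Fin k) × Fin (ℓ + 1 - e i)) → F := a - b with hcdef
  have hc0 : c ≠ 0 := sub_ne_zero.2 hne
  have hΨc : Ψ.mulVec c = 0 := by
    rw [hcdef, Matrix.mulVec_sub]
    simp only [Matrix.mulVecLin_apply] at hab
    rw [hab, sub_self]
  set v : Fin n → Polynomial F := fun j => ∑ p, c p • w p j with hvdef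
  have hvne : v ≠ 0 := by
    intro h
    exact hc0 (hindep c (fun j => congrFun h j))
  have hvcode : ∃ u', v = G.mulVec u' := by
    have : v = H.mulVec (uOf c) := by funext j; exact hident c j
    obtain ⟨u', hu'⟩ := hGood.1 (uOf c)
    exact ⟨u', this.trans hu'⟩
  have hvanish : ∀ q ∈ T, (v q.1).coeff (q.2 : ℕ) = 0 := by
    intro q hq
    have h1 := congrFun hΨc ⟨q, hq⟩
    simp only [Matrix.mulVec, dotProduct, Pi.zero_apply, hΨ] at h1
    rw [hvdef]
    simp only [Polynomial.finset_sum_coeff, Polynomial.coeff_smul, smul_eq_mul]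
    rw [← h1]
    exact Finset.sum_congr rfl (fun p _ => mul_comm _ _)
  have hvdeg : ∀ j, (v j).natDegree ≤ ℓ := by
    intro j
    refine Polynomial.natDegree_sum_le_of_forall_le _ _ (fun p _ => ?_)
    exact (Polynomial.natDegree_smul_le _ _).trans (hwdeg p j)
  -- counting the weight
  set A : Finset (Fin n × Fin (ℓ + 1)) :=
    Finset.univ.filter (fun q => (v q.1).coeff (q.2 : ℕ) ≠ 0) with hA
  have hsuppcard : ∀ j, (v j).support.card =
      (Finset.univ.filter (fun t : Fin (ℓ + 1) => (v j).coeff (t : ℕ) ≠ 0)).card := by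
    intro j
    have himg : (v j).support =
        (Finset.univ.filter (fun t : Fin (ℓ + 1) => (v j).coeff (t : ℕ) ≠ 0)).image
          (fun t : Fin (ℓ + 1) => (t : ℕ)) := by
      ext t
      simp only [Polynomial.mem_support_iff, Finset.mem_image, Finset.mem_filter,
        Finset.mem_univ, true_and]
      constructor
      · intro ht
        have htle : t ≤ ℓ := (Polynomial.le_natDegree_of_ne_zero ht).trans (hvdeg j)
        exact ⟨⟨t, by omega⟩, ht, rfl⟩
      · rintro ⟨t', ht', rfl⟩
        exact ht'
    rw [himg, Finset.card_image_of_injective _ Fin.val_injective]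
  have hAcard : polyVecWeight v = A.card := by
    rw [polyVecWeight, hA, Finset.card_filter]
    rw [Fintype.sum_prod_type]
    refine Finset.sum_congr rfl (fun j _ => ?_)
    rw [hsuppcard j, Finset.card_filter]
  have hAdisj : A ⊆ Finset.univ \ T := by
    intro q hq
    rw [Finset.mem_sdiff]
    refine ⟨Finset.mem_univ q, fun hqT => ?_⟩
    rw [hA, Finset.mem_filter] at hq
    exact hq.2 (hvanish q hqT)
  have hwt : polyVecWeight v ≤ n * (ℓ + 1) - (d - 1) := by
    rw [hAcard]
    refine (Finset.card_le_card hAdisj).trans ?_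
    rw [Finset.card_sdiff_of_subset (Finset.subset_univ T), hcarduniv, hTcard]
  -- conclude
  have hfree : freeDist {v | ∃ u : Fin k → Polynomial F, v = G.mulVec u} ≤ polyVecWeight v :=
    Nat.sInf_le ⟨v, hvcode, hvne, rfl⟩
  have hm : n * (ℓ + 1) = (n - k) * (ℓ + 1) + k * (ℓ + 1) := by
    rw [← add_mul, Nat.sub_add_cancel hkn.le]
  obtain ⟨A, hA⟩ : ∃ x, (n - k) * (ℓ + 1) = x := ⟨_, rfl⟩
  obtain ⟨B, hB⟩ : ∃ x, k * (ℓ + 1) = x := ⟨_, rfl⟩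
  rw [hA] at hm
  rw [hB] at hm hkl
  rw [hm] at hwt
  have hfinal := le_trans hfree hwt
  rw [hA]
  omega
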